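/- Let F ∈ Homeo_ℤ(ℝ) and suppose F = F₁ ∘ F₂ ∘ ⋯ ∘ F_{k+2} where each Fᵢ fixes pointwise some nonempty open interval of ℝ and belongs to Homeo_ℤ(ℝ). Then min_{x ∈ ℝ} |F(x) - x| < k + 1. -/

import Mathlib

def HomeoZ (F : Equiv.Perm ℝ) : Prop :=
  Continuous F ∧ StrictMono F ∧ ∀ x : ℝ, F (x + 1) = F x + 1

/-- `G` fixes pointwise some nonempty open interval. -/
def FixesOpenInterval (G : Equiv.Perm ℝ) : Prop :=
  ∃ a b : ℝ, a < b ∧ ∀ x ∈ Set.Ioo a b, G x = x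

lemma addZ (G : Equiv.Perm ℝ) (h : ∀ x : ℝ, G (x + 1) = G x + 1) :
    ∀ (n : ℤ) (x : ℝ), G (x + n) = G x + n := by
  intro n
  induction n using Int.induction_on with
  | zero => simp
  | succ n ih =>
    intro x
    push_cast at ih ⊢
    rw [← add_assoc, h, ih]
    ring
  | pred n ih =>
    intro x
    have hsub : ∀ z : ℝ, G (z - 1) = G z - 1 := by
      intro z
      have := h (z - 1)
      simp at this
      linarith
    have h2 := ih x
    have e : x + ((-(n : ℤ) - 1 : ℤ) : ℝ) = (x + ((-(n : ℤ) : ℤ) : ℝ)) - 1 := by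
      push_cast; ring
    rw [e, hsub, h2]
    push_cast
    ring

lemma disp_lt_one (G : Equiv.Perm ℝ) (hG : HomeoZ G) (hfix : FixesOpenInterval G)
    (y : ℝ) : |G y - y| < 1 := by
  obtain ⟨_, hmono, hper⟩ := hG
  obtain ⟨a, b, hab, hfix⟩ := hfix
  set c := (a + b) / 2 with hc_def
  have hc : G c = c := hfix c ⟨by simp [hc_def]; linarith, by simp [hc_def]; linarith⟩
  have hZ := addZ G hper
  set n := ⌊y - c⌋ with hn
  have h1 : c + n ≤ y := by have := Int.floor_le (y - c); linarith
  have h2 : y < c + n + 1 := by have := Int.lt_floor_add_one (y - c); linarith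
  have e1 : G (c + n) = c + n := by rw [hZ n c, hc]
  have e2 : G (c + n + 1) = c + n + 1 := by
    have := hZ (n + 1) c
    rw [hc] at this
    push_cast at this
    rw [← add_assoc] at this
    exact this
  have m1 : G (c + n) ≤ G y := (hmono.le_iff_le).mpr h1
  have m2 : G y < G (c + n + 1) := hmono h2
  rw [e1] at m1
  rw [e2] at m2
  rw [abs_lt]
  constructor <;> linarith

lemma prod_disp (L : List (Equiv.Perm ℝ)) (hne : L ≠ [])
    (h : ∀ G ∈ L, ∀ y : ℝ, |G y - y| < 1) (x : ℝ) :
    |L.prod x - x| < L.length := by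
  induction L with
  | nil => simp at hne
  | cons a t ih =>
    have hp : (a :: t).prod x = a (t.prod x) := by
      simp [List.prod_cons, Equiv.Perm.mul_apply]
    rcases eq_or_ne t [] with rfl | hne'
    · simpa using h a (by simp) x
    · have h1 := h a (by simp) (t.prod x)
      have h2 := ih hne' (fun G hG y => h G (by simp [hG]) y)
      have habs : |a (t.prod x) - x| ≤ |a (t.prod x) - t.prod x| + |t.prod x - x| :=
        abs_sub_le _ _ _
      rw [hp]
      have hlen : ((a :: t).length : ℝ) = (t.length : ℝ) + 1 := by simp
      rw [hlen]
      linarith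

theorem displacement_bound_of_fragmentation
    (k : ℕ) (L : List (Equiv.Perm ℝ)) (hlen : L.length = k + 2)
    (hmem : ∀ G ∈ L, HomeoZ G ∧ FixesOpenInterval G)
    (F : Equiv.Perm ℝ) (hF : F = L.prod) :
    sInf (Set.range fun x : ℝ => |F x - x|) < (k : ℝ) + 1 := by
  obtain rfl | ⟨L', G, rfl⟩ := L.eq_nil_or_concat
  · simp at hlen
  · have hGL : G ∈ L'.concat G := by simp
    obtain ⟨a, b, hab, hfixG⟩ := (hmem G hGL).2
    set x₀ := (a + b) / 2 with hx₀
    have hGx : G x₀ = x₀ := hfixG x₀ ⟨by simp [hx₀]; linarith, by simp [hx₀]; linarith⟩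
    have hlen' : L'.length = k + 1 := by
      simpa [List.concat] using hlen
    have hne : L' ≠ [] := by
      intro h; rw [h] at hlen'; simp at hlen'
    have hFx : F x₀ = L'.prod x₀ := by
      rw [hF, List.concat_eq_append, List.prod_append]
      simp [Equiv.Perm.mul_apply, hGx]
    have hdisp : |F x₀ - x₀| < (k : ℝ) + 1 := by
      have := prod_disp L' hne (fun H hH y =>
        disp_lt_one H (hmem H (by simp [hH])).1 (hmem H (by simp [hH])).2 y) x₀
      rw [hFx]
      rw [hlen'] at this
      push_cast at this
      linarith
    have hbdd : BddBelow (Set.range fun x : ℝ => |F x - x|) := by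
      refine ⟨0, ?_⟩
      rintro v ⟨x, rfl⟩
      exact abs_nonneg _
    exact lt_of_le_of_lt (csInf_le hbdd ⟨x₀, rfl⟩) hdisp
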